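/- Let n ≥ 1 and let U be a nonempty upset of a De Morgan lattice L. Then fgₙ(Comp U) is the complete n-filter generated by U: it is a complete n-filter containing U, and it is contained in every complete n-filter on L that contains U. -/
import Mathlib


/-- A De Morgan lattice: a distributive lattice with an antitone involution. -/
class DeMorgan (L : Type*) extends DistribLattice L where
  dneg : L → L
  dneg_dneg : ∀ x : L, dneg (dneg x) = x
  dneg_sup : ∀ x y : L, dneg (x ⊔ y) = dneg x ⊓ dneg y

prefix:max "∼" => DeMorgan.dneg

section Defs

variable {α : Type*}

/-- An upward closed subset of a lattice. -/
def IsUpset [Lattice α] (F : Set α) : Prop :=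
  ∀ ⦃x y : α⦄, x ∈ F → x ≤ y → y ∈ F

/-- A lattice filter: an upset closed under binary meets. -/
def IsLatFilter [Lattice α] (F : Set α) : Prop :=
  IsUpset F ∧ ∀ x y : α, x ∈ F → y ∈ F → x ⊓ y ∈ F

/-- An `n`-filter: an upset such that for every nonempty finite `Y`, if the meet of
every nonempty subset of `Y` of size at most `n` lies in `F`, then so does the meet of `Y`. -/
def IsNFilter [Lattice α] (n : ℕ) (F : Set α) : Prop :=
  IsUpset F ∧ ∀ (Y : Finset α) (hY : Y.Nonempty),
    (∀ (X : Finset α) (hX : X.Nonempty), X ⊆ Y → X.card ≤ n → X.inf' hX id ∈ F) →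
    Y.inf' hY id ∈ F

/-- A prime upset: `x ⊔ y ∈ F` implies `x ∈ F` or `y ∈ F`. -/
def IsPrimeUpset [Lattice α] (F : Set α) : Prop :=
  ∀ x y : α, x ⊔ y ∈ F → x ∈ F ∨ y ∈ F

/-- A downward closed subset of a lattice. -/
def IsDownset [Lattice α] (I : Set α) : Prop :=
  ∀ ⦃x y : α⦄, x ∈ I → y ≤ x → y ∈ I

/-- A lattice ideal: a downset closed under binary joins. -/
def IsIdeal [Lattice α] (I : Set α) : Prop :=
  IsDownset I ∧ ∀ x y : α, x ∈ I → y ∈ I → x ⊔ y ∈ I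

/-- An `n`-ideal: the order dual notion of an `n`-filter. -/
def IsNIdeal [Lattice α] (n : ℕ) (I : Set α) : Prop :=
  IsDownset I ∧ ∀ (Y : Finset α) (hY : Y.Nonempty),
    (∀ (X : Finset α) (hX : X.Nonempty), X ⊆ Y → X.card ≤ n → X.sup' hX id ∈ I) →
    Y.sup' hY id ∈ I

variable {L : Type*} [DeMorgan L]

/-- Almost complete upset: `x ∈ F` implies `x ⊓ (y ⊔ ∼y) ∈ F`. -/
def AlmostComplete (F : Set L) : Prop := ∀ x ∈ F, ∀ y : L, x ⊓ (y ⊔ ∼y) ∈ F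

/-- Complete upset: almost complete and nonempty. -/
def IsCompleteUpset (F : Set L) : Prop := AlmostComplete F ∧ F.Nonempty

/-- Almost consistent upset: `(x ⊓ ∼x) ⊔ y ∈ F` implies `y ∈ F`. -/
def AlmostConsistent (F : Set L) : Prop := ∀ x y : L, (x ⊓ ∼x) ⊔ y ∈ F → y ∈ F

/-- Consistent upset: almost consistent and not total. -/
def IsConsistentUpset (F : Set L) : Prop := AlmostConsistent F ∧ F ≠ Set.univ

/-- Classical upset: complete and consistent. -/
def IsClassicalUpset (F : Set L) : Prop := IsCompleteUpset F ∧ IsConsistentUpset F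

/-- Kalman upset. -/
def IsKalmanUpset (F : Set L) : Prop :=
  ∀ x y z u : L, ((x ⊓ ∼x) ⊓ z) ⊔ u ∈ F → ((y ⊔ ∼y) ⊓ z) ⊔ u ∈ F

/-- A homomorphism of De Morgan lattices. -/
def IsDMHom {L M : Type*} [DeMorgan L] [DeMorgan M] (h : L → M) : Prop :=
  (∀ x y : L, h (x ⊓ y) = h x ⊓ h y) ∧ (∀ x y : L, h (x ⊔ y) = h x ⊔ h y) ∧
    ∀ x : L, h (∼x) = ∼(h x)

/-- The filter generated by all elements of the form `x ⊔ ∼x`. -/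
def Fcomp (L : Type*) [DeMorgan L] : Set L :=
  {a | ∃ (s : Finset L) (hs : s.Nonempty), s.inf' hs (fun x => x ⊔ ∼x) ≤ a}

/-- The `n`-filter generated by a set. -/
def nFilterGen (n : ℕ) (U : Set L) : Set L :=
  ⋂₀ {F : Set L | IsNFilter n F ∧ U ⊆ F}

/-- `Comp U`. -/
def CompCl (U : Set L) : Set L := {x | ∃ a ∈ U, ∃ f ∈ Fcomp L, a ⊓ f ≤ x}

/-- `Cons U`. -/
def ConsCl (U : Set L) : Set L := {x | ∃ f ∈ Fcomp L, ∼f ⊔ x ∈ U}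

/-- A congruence of De Morgan lattices, as a binary relation. -/
def IsCongruence (θ : L → L → Prop) : Prop :=
  Equivalence θ ∧
  (∀ a b c d : L, θ a b → θ c d → θ (a ⊓ c) (b ⊓ d)) ∧
  (∀ a b c d : L, θ a b → θ c d → θ (a ⊔ c) (b ⊔ d)) ∧
  ∀ a b : L, θ a b → θ (∼a) (∼b)

end Defs

/-- The four-element De Morgan lattice `DM₁` on `Bool × Bool`. -/
instance : DeMorgan (Bool × Bool) :=
  { (inferInstance : DistribLattice (Bool × Bool)) with
    dneg := fun p => (!p.2, !p.1)
    dneg_dneg := by decide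
    dneg_sup := by decide }

/-- Powers of `DM₁`, with componentwise operations. -/
instance {ι : Type*} : DeMorgan (ι → Bool × Bool) :=
  { (inferInstance : DistribLattice (ι → Bool × Bool)) with
    dneg := fun f i => ∼(f i)
    dneg_dneg := fun f => funext fun i => DeMorgan.dneg_dneg (f i)
    dneg_sup := fun f g => funext fun i => DeMorgan.dneg_sup (f i) (g i) }

section Aux

variable {L : Type*} [DeMorgan L]

lemma isNFilter_nFilterGen (n : ℕ) (S : Set L) : IsNFilter n (nFilterGen n S) := by
  constructor
  · intro x y hx hxy F hF
    exact hF.1.1 (hx F hF) hxy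
  · intro Y hY h F hF
    exact hF.1.2 Y hY fun X hX hXY hcard => h X hX hXY hcard F hF

lemma subset_nFilterGen (n : ℕ) (S : Set L) : S ⊆ nFilterGen n S :=
  fun x hx F hF => hF.2 hx

lemma nFilterGen_min {n : ℕ} {S F : Set L} (hF : IsNFilter n F) (hSF : S ⊆ F) :
    nFilterGen n S ⊆ F := fun x hx => hx F ⟨hF, hSF⟩

lemma inf'_inf_const {s : Finset L} (hs : s.Nonempty) (e : L) :
    s.inf' hs (fun x => x ⊓ e) = s.inf' hs id ⊓ e := by
  induction hs using Finset.Nonempty.cons_induction with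
  | singleton x => simp
  | cons x s hx hs ih =>
    rw [Finset.inf'_cons (H := hs), Finset.inf'_cons (H := hs), ih,
      inf_inf_inf_comm, inf_idem]
    rfl

lemma preimage_inf_isNFilter {n : ℕ} {N : Set L} (hN : IsNFilter n N) (e : L) :
    IsNFilter n {x | x ⊓ e ∈ N} := by
  classical
  constructor
  · intro x y hx hxy
    exact hN.1 hx (inf_le_inf_right e hxy)
  · intro Y hY h
    set g : L → L := fun x => x ⊓ e with hg
    set a : L → L := fun b => if h : ∃ x ∈ Y, g x = b then h.choose else b with ha
    have hY' : (Y.image g).Nonempty := hY.image g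
    have key : (Y.image g).inf' hY' id ∈ N := by
      apply hN.2 (Y.image g) hY'
      intro X' hX' hsub hcard
      have hsec : ∀ b ∈ X', a b ∈ Y ∧ g (a b) = b := by
        intro b hb
        obtain ⟨x, hxY, hgx⟩ := Finset.mem_image.1 (hsub hb)
        have hex : ∃ x ∈ Y, g x = b := ⟨x, hxY, hgx⟩
        simp only [ha, dif_pos hex]
        exact ⟨hex.choose_spec.1, hex.choose_spec.2⟩
      have hXsub : X'.image a ⊆ Y := by
        intro z hz
        obtain ⟨b, hb, rfl⟩ := Finset.mem_image.1 hz
        exact (hsec b hb).1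
      have hXne : (X'.image a).Nonempty := hX'.image a
      have hXcard : (X'.image a).card ≤ n := le_trans (Finset.card_image_le) hcard
      have h1 : (X'.image a).inf' hXne id ⊓ e ∈ N :=
        h (X'.image a) hXne hXsub hXcard
      have h2 : (X'.image a).inf' hXne id ⊓ e = X'.inf' hX' id := by
        rw [← inf'_inf_const hXne e]
        rw [show (fun x => x ⊓ e) = g from rfl, Finset.inf'_image]
        exact Finset.inf'_congr hX' rfl (fun b hb => (hsec b hb).2)
      rwa [h2] at h1
    have h3 : (Y.image g).inf' hY' id = Y.inf' hY id ⊓ e := by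
      rw [Finset.inf'_image]
      exact inf'_inf_const hY e
    rwa [h3] at key

lemma inf_fcomp_mem {G : Set L} (hup : IsUpset G) (hac : AlmostComplete G)
    {a : L} (haG : a ∈ G) {s : Finset L} (hs : s.Nonempty) :
    a ⊓ s.inf' hs (fun x => x ⊔ ∼x) ∈ G := by
  induction hs using Finset.Nonempty.cons_induction with
  | singleton x => simpa using hac a haG x
  | cons x s hx hs ih =>
    have := hac _ ih x
    refine hup this (le_of_eq ?_)
    rw [Finset.inf'_cons (H := hs), inf_assoc,
      inf_comm (s.inf' hs fun x => x ⊔ ∼x) (x ⊔ ∼x)]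

end Aux

/-- `fgₙ (Comp U)` is the complete `n`-filter generated by `U`. -/
theorem statement15 {L : Type*} [DeMorgan L] [Nonempty L] (n : ℕ) (hn : 1 ≤ n)
    (U : Set L) (hU : IsUpset U) (hne : U.Nonempty) :
    (IsNFilter n (nFilterGen n (CompCl U)) ∧ IsCompleteUpset (nFilterGen n (CompCl U))) ∧
    U ⊆ nFilterGen n (CompCl U) ∧
    ∀ G : Set L, IsNFilter n G → IsCompleteUpset G → U ⊆ G →
      nFilterGen n (CompCl U) ⊆ G := by
  classical
  set N := nFilterGen n (CompCl U) with hN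
  have hNF : IsNFilter n N := isNFilter_nFilterGen n _
  have hUC : U ⊆ CompCl U := by
    intro a ha
    exact ⟨a, ha, a ⊔ ∼a, ⟨{a}, Finset.singleton_nonempty a, by simp⟩,
      le_trans inf_le_left le_rfl⟩
  have hUN : U ⊆ N := fun x hx => subset_nFilterGen n _ (hUC hx)
  have hcompN : AlmostComplete N := by
    intro x hx y
    set e := y ⊔ ∼y with he
    have hF' : IsNFilter n {z | z ⊓ e ∈ N} := preimage_inf_isNFilter hNF e
    have hsub : CompCl U ⊆ {z | z ⊓ e ∈ N} := by
      rintro z ⟨a, ha, f, ⟨s, hs, hsf⟩, hle⟩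
      apply subset_nFilterGen n (CompCl U)
      refine ⟨a, ha, f ⊓ e, ⟨insert y s, Finset.insert_nonempty y s, ?_⟩, ?_⟩
      · rw [Finset.inf'_insert (H := hs)]
        exact le_inf (le_trans inf_le_right hsf) inf_le_left
      · calc a ⊓ (f ⊓ e) = (a ⊓ f) ⊓ e := by rw [inf_assoc]
          _ ≤ z ⊓ e := inf_le_inf_right e hle
    exact nFilterGen_min hF' hsub hx
  refine ⟨⟨hNF, hcompN, hne.mono hUN⟩, hUN, ?_⟩
  intro G hG hGc hUG
  apply nFilterGen_min hG
  rintro z ⟨a, ha, f, ⟨s, hs, hsf⟩, hle⟩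
  have haG : a ∈ G := hUG ha
  have := inf_fcomp_mem hG.1 hGc.1 haG hs
  exact hG.1 this (le_trans (inf_le_inf_left a hsf) hle)
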